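/- arXiv:0708.2757 — 2 statements merged into one kernel-verified Lean document; each statement's English description precedes it below -/
import Mathlib

section
/- Let H be a cocommutative bialgebra over a field k (τ∘Δ = Δ, where τ is the flip of H⊗H) and let R ∈ H⊗H be an invertible element satisfying R·(τ∘Δ)(x) = Δ(x)·R for all x ∈ H, the triangle equations (id⊗Δ)(R) = R₁₃·R₁₂ and (Δ⊗id)(R) = R₁₃·R₂₃, and the normalisation (ε⊗id)(R) = (id⊗ε)(R) = 1. Then R satisfies the 2-cocycle condition: (R⊗1)·(Δ⊗id)(R) = (1⊗R)·(id⊗Δ)(R). -/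
open TensorProduct

noncomputable section

variable (k : Type*) [Field k]

section BialgDefs
variable (H : Type*) [Ring H] [Bialgebra k H]

/-- The comultiplication as an algebra homomorphism. -/
def Δa : H →ₐ[k] H ⊗[k] H := Bialgebra.comulAlgHom k H

/-- The counit as an algebra homomorphism. -/
def εa : H →ₐ[k] k := Bialgebra.counitAlgHom k H

end BialgDefs

section AlgDefs
variable (H : Type*) [Ring H] [Algebra k H]

/-- The flip automorphism of `H ⊗ H`. -/
def τa : H ⊗[k] H ≃ₐ[k] H ⊗[k] H := Algebra.TensorProduct.comm k H H

/-- The associator. -/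
def αa : (H ⊗[k] H) ⊗[k] H ≃ₐ[k] H ⊗[k] (H ⊗[k] H) := Algebra.TensorProduct.assoc k k k H H H

end AlgDefs

section MoreDefs
variable (H : Type*) [Ring H] [Bialgebra k H]

/-- `Δ ⊗ id`. -/
def ΔL : H ⊗[k] H →ₐ[k] (H ⊗[k] H) ⊗[k] H :=
  Algebra.TensorProduct.map (Δa k H) (AlgHom.id k H)

/-- `id ⊗ Δ`. -/
def ΔR : H ⊗[k] H →ₐ[k] H ⊗[k] (H ⊗[k] H) :=
  Algebra.TensorProduct.map (AlgHom.id k H) (Δa k H)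

/-- `ε ⊗ id`, composed with the identification `k ⊗ H ≅ H`. -/
def εL : H ⊗[k] H →ₐ[k] H :=
  (Algebra.TensorProduct.lid k H).toAlgHom.comp
    (Algebra.TensorProduct.map (εa k H) (AlgHom.id k H))

/-- `id ⊗ ε`, composed with the identification `H ⊗ k ≅ H`. -/
def εR : H ⊗[k] H →ₐ[k] H :=
  (Algebra.TensorProduct.rid k k H).toAlgHom.comp
    (Algebra.TensorProduct.map (AlgHom.id k H) (εa k H))

/-- The 2-cocycle condition `(F⊗1)·(Δ⊗id)(F) = (1⊗F)·(id⊗Δ)(F)`. -/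
def IsCocycle (F : H ⊗[k] H) : Prop :=
  αa k H ((F ⊗ₜ[k] (1 : H)) * ΔL k H F) = ((1 : H) ⊗ₜ[k] F) * ΔR k H F

/-- The normalisation condition `(ε⊗id)(F) = (id⊗ε)(F) = 1`. -/
def IsNormalized (F : H ⊗[k] H) : Prop := εL k H F = 1 ∧ εR k H F = 1

end MoreDefs

/-- `(f, F)` is a twisted homomorphism of bialgebras. -/
def IsTwistedHom {H H' : Type*} [Ring H] [Ring H'] [Bialgebra k H] [Bialgebra k H']
    (f : H →ₐ[k] H') (F : H' ⊗[k] H') : Prop :=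
  IsUnit F ∧
  (∀ x : H, F * Δa k H' (f x) = Algebra.TensorProduct.map f f (Δa k H x) * F) ∧
  IsCocycle k H' F ∧ IsNormalized k H' F


section RDefs
variable (H : Type*) [Ring H] [Algebra k H]

/-- `R₁₂ = R ⊗ 1`, as an element of `H ⊗ (H ⊗ H)`. -/
def r12 (R : H ⊗[k] H) : H ⊗[k] (H ⊗[k] H) := αa k H (R ⊗ₜ[k] (1 : H))

/-- `R₂₃ = 1 ⊗ R`. -/
def r23 (R : H ⊗[k] H) : H ⊗[k] (H ⊗[k] H) := (1 : H) ⊗ₜ[k] R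

/-- `R₁₃ = (id ⊗ τ)(R ⊗ 1)`. -/
def r13 (R : H ⊗[k] H) : H ⊗[k] (H ⊗[k] H) :=
  Algebra.TensorProduct.map (AlgHom.id k H) (τa k H).toAlgHom (αa k H (R ⊗ₜ[k] (1 : H)))

end RDefs

/-- On a cocommutative bialgebra, any universal R-matrix satisfies the
2-cocycle condition. -/
theorem rmatrix_isCocycle {H : Type*} [Ring H] [Bialgebra k H]
    (hcc : ∀ x : H, τa k H (Δa k H x) = Δa k H x)
    (R : H ⊗[k] H)
    (hR : IsUnit R)
    (hconj : ∀ x : H, R * τa k H (Δa k H x) = Δa k H x * R)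
    (htri1 : ΔR k H R = r13 k H R * r12 k H R)
    (htri2 : αa k H (ΔL k H R) = r13 k H R * r23 k H R)
    (hnorm : IsNormalized k H R) :
    IsCocycle k H R := by
  have hkey : ∀ y : H, R * Δa k H y = Δa k H y * R := fun y => by
    nth_rewrite 1 [← hcc y]; exact hconj y
  -- r23 commutes with everything in the image of ΔR
  have hA : ∀ z : H ⊗[k] H, r23 k H R * ΔR k H z = ΔR k H z * r23 k H R := by
    intro z
    induction z using TensorProduct.induction_on with
    | zero => simp
    | tmul x y =>
        simp only [ΔR, Algebra.TensorProduct.map_tmul, AlgHom.coe_id, id_eq, r23,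
          Algebra.TensorProduct.tmul_mul_tmul, one_mul, mul_one, hkey]
    | add u v hu hv => simp only [map_add, mul_add, add_mul, hu, hv]
  -- τ ∘ τ = id
  have hinv : ∀ u : H ⊗[k] H, τa k H (τa k H u) = u := by
    intro u
    induction u using TensorProduct.induction_on with
    | zero => simp
    | tmul a b => simp [τa, Algebra.TensorProduct.comm_tmul]
    | add u v hu hv => simp only [map_add, hu, hv]
  -- (id ⊗ τ) fixes the image of ΔR (cocommutativity)
  have hfix : ∀ z : H ⊗[k] H,
      Algebra.TensorProduct.map (AlgHom.id k H) (τa k H).toAlgHom (ΔR k H z) = ΔR k H z := by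
    intro z
    induction z using TensorProduct.induction_on with
    | zero => simp
    | tmul x y =>
        simp only [ΔR, Algebra.TensorProduct.map_tmul, AlgHom.coe_id, id_eq,
          AlgEquiv.toAlgHom_eq_coe, AlgHom.coe_coe, hcc]
        exact congrArg (x ⊗ₜ[k] ·) (hcc y)
    | add u v hu hv => simp only [map_add, hu, hv]
  -- (id ⊗ τ)(r12) = r13 and (id ⊗ τ)(r13) = r12
  have h1312 : Algebra.TensorProduct.map (AlgHom.id k H) (τa k H).toAlgHom (r12 k H R)
      = r13 k H R := rfl
  have h1213 : Algebra.TensorProduct.map (AlgHom.id k H) (τa k H).toAlgHom (r13 k H R)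
      = r12 k H R := by
    rw [r13, r12]
    generalize αa k H (R ⊗ₜ[k] (1 : H)) = w
    induction w using TensorProduct.induction_on with
    | zero => simp
    | tmul a b => simp [hinv b]
    | add u v hu hv => simp only [map_add, hu, hv]
  -- r13 and r12 commute
  have hcomm : r13 k H R * r12 k H R = r12 k H R * r13 k H R := by
    have := congrArg (Algebra.TensorProduct.map (AlgHom.id k H) (τa k H).toAlgHom) htri1
    rw [hfix, map_mul, h1312, h1213, htri1] at this
    exact this
  show αa k H ((R ⊗ₜ[k] (1 : H)) * ΔL k H R) = ((1 : H) ⊗ₜ[k] R) * ΔR k H R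
  calc αa k H ((R ⊗ₜ[k] (1 : H)) * ΔL k H R)
      = r12 k H R * (r13 k H R * r23 k H R) := by rw [map_mul, htri2]; rfl
    _ = r12 k H R * r13 k H R * r23 k H R := by rw [mul_assoc]
    _ = r13 k H R * r12 k H R * r23 k H R := by rw [hcomm]
    _ = ΔR k H R * r23 k H R := by rw [htri1]
    _ = r23 k H R * ΔR k H R := (hA R).symm
    _ = ((1 : H) ⊗ₜ[k] R) * ΔR k H R := rfl

end
end

section
/- Let g be a Lie algebra over a field k of characteristic zero, and let X, Y ∈ U(g)⊗U(g) lie in the image of g⊗g, be antisymmetric (τ(X) = −X, τ(Y) = −Y) and g-invariant ([Δ(x), X] = [Δ(x), Y] = 0 for all x ∈ g). Then: (i) the commutator [X,Y] is a g-invariant additive 2-cocycle and is symmetric, τ([X,Y]) = [X,Y]; (ii) there exists a central element a ∈ Z(U(g)) with [X,Y] = a⊗1 + 1⊗a − Δ(a); (iii) for every Z ∈ U(g)⊗U(g) in the image of g⊗g with τ(Z) = −Z and [Δ(x), Z] = 0 for all x ∈ g, one has [[X,Y], Z] = 0. -/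
open TensorProduct

noncomputable section

variable (k : Type*) [Field k] [CharZero k]
variable (g : Type*) [LieRing g] [LieAlgebra k g]

attribute [local instance] LieRing.ofAssociativeRing in
/-- The canonical linear map `g → U(g)`. -/
def ιU : g →ₗ[k] UniversalEnvelopingAlgebra k g :=
  (UniversalEnvelopingAlgebra.ι k).toLinearMap

/-- The canonical map `g ⊗ g → U(g) ⊗ U(g)`; its range is "the image of `g ⊗ g`". -/
def ιι : g ⊗[k] g →ₗ[k]
    UniversalEnvelopingAlgebra k g ⊗[k] UniversalEnvelopingAlgebra k g :=
  TensorProduct.map (ιU k g) (ιU k g)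

/-- The flip automorphism of `U(g) ⊗ U(g)`. -/
def τU : UniversalEnvelopingAlgebra k g ⊗[k] UniversalEnvelopingAlgebra k g ≃ₐ[k]
    UniversalEnvelopingAlgebra k g ⊗[k] UniversalEnvelopingAlgebra k g :=
  Algebra.TensorProduct.comm k _ _

/-- The associator for `U(g)`. -/
def αU : (UniversalEnvelopingAlgebra k g ⊗[k] UniversalEnvelopingAlgebra k g) ⊗[k]
      UniversalEnvelopingAlgebra k g ≃ₐ[k]
    UniversalEnvelopingAlgebra k g ⊗[k]
      (UniversalEnvelopingAlgebra k g ⊗[k] UniversalEnvelopingAlgebra k g) :=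
  Algebra.TensorProduct.assoc k k k _ _ _

/-- The alternation `Alt₂(X) = ½(X − τ(X))`. -/
def alt2 (X : UniversalEnvelopingAlgebra k g ⊗[k] UniversalEnvelopingAlgebra k g) :
    UniversalEnvelopingAlgebra k g ⊗[k] UniversalEnvelopingAlgebra k g :=
  (2 : k)⁻¹ • (X - τU k g X)

variable {g} in
/-- `X` is an additive 2-cocycle: `1⊗X + (id⊗Δ)(X) = X⊗1 + (Δ⊗id)(X)`. -/
def IsAdd2Cocycle
    (Δ : UniversalEnvelopingAlgebra k g →ₐ[k]
      UniversalEnvelopingAlgebra k g ⊗[k] UniversalEnvelopingAlgebra k g)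
    (X : UniversalEnvelopingAlgebra k g ⊗[k] UniversalEnvelopingAlgebra k g) : Prop :=
  (1 : UniversalEnvelopingAlgebra k g) ⊗ₜ[k] X +
      Algebra.TensorProduct.map (AlgHom.id k (UniversalEnvelopingAlgebra k g)) Δ X =
    αU k g (X ⊗ₜ[k] (1 : UniversalEnvelopingAlgebra k g) +
      Algebra.TensorProduct.map Δ (AlgHom.id k (UniversalEnvelopingAlgebra k g)) X)

local notation "Ug" => UniversalEnvelopingAlgebra k g

-- ==================== auxiliary infrastructure ====================

section Aux

/-- Induction principle for the universal enveloping algebra. -/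
theorem Ug_induction {P : Ug → Prop}
    (halg : ∀ r : k, P (algebraMap k Ug r))
    (hgen : ∀ x : g, P (ιU k g x))
    (hmul : ∀ u v, P u → P v → P (u * v))
    (hadd : ∀ u v, P u → P v → P (u + v)) : ∀ u : Ug, P u := by
  intro u
  obtain ⟨p, rfl⟩ : ∃ p, UniversalEnvelopingAlgebra.mkAlgHom k g p = u :=
    RingCon.mkₐ_surjective (α := k) _ u
  induction p using TensorAlgebra.induction with
  | algebraMap r => rw [AlgHom.commutes]; exact halg r
  | ι x =>
      have : UniversalEnvelopingAlgebra.mkAlgHom k g (TensorAlgebra.ι k x) = ιU k g x :=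
        rfl
      rw [this]; exact hgen x
  | mul a b ha hb => rw [map_mul]; exact hmul _ _ ha hb
  | add a b ha hb => rw [map_add]; exact hadd _ _ ha hb

/-- An element commuting with all generators is central. -/
theorem central_of_commute_ι (a : Ug) (h : ∀ x : g, ιU k g x * a = a * ιU k g x) :
    ∀ u : Ug, a * u = u * a := by
  refine Ug_induction k g (fun r => ?_) (fun x => (h x).symm) (fun u v hu hv => ?_)
    (fun u v hu hv => ?_)
  · exact (Algebra.commutes r a).symm
  · rw [← mul_assoc, hu, mul_assoc, hv, mul_assoc]
  · rw [mul_add, add_mul, hu, hv]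

/-- If `Z` commutes with `Δ` of every generator then it commutes with `Δ` of everything. -/
theorem commute_delta (Δ : Ug →ₐ[k] Ug ⊗[k] Ug) (Z : Ug ⊗[k] Ug)
    (h : ∀ x : g, Δ (ιU k g x) * Z = Z * Δ (ιU k g x)) :
    ∀ u : Ug, Δ u * Z = Z * Δ u := by
  refine Ug_induction k g (fun r => ?_) (fun x => h x) (fun u v hu hv => ?_)
    (fun u v hu hv => ?_)
  · rw [AlgHom.commutes]; exact Algebra.commutes r Z
  · rw [map_mul, mul_assoc, hv, ← mul_assoc, hu, mul_assoc]
  · rw [map_add, add_mul, mul_add, hu, hv]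

/-- `a ⊗ 1` is central in `Ug ⊗ Ug` when `a` is central. -/
theorem tmul_one_comm (a : Ug) (ha : ∀ u : Ug, a * u = u * a) (T : Ug ⊗[k] Ug) :
    (a ⊗ₜ[k] (1 : Ug)) * T = T * (a ⊗ₜ[k] (1 : Ug)) := by
  induction T using TensorProduct.induction_on with
  | zero => simp
  | tmul u v => simp only [Algebra.TensorProduct.tmul_mul_tmul, one_mul, mul_one, ha u]
  | add T₁ T₂ h₁ h₂ => rw [mul_add, add_mul, h₁, h₂]

/-- `1 ⊗ a` is central in `Ug ⊗ Ug` when `a` is central. -/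
theorem one_tmul_comm (a : Ug) (ha : ∀ u : Ug, a * u = u * a) (T : Ug ⊗[k] Ug) :
    ((1 : Ug) ⊗ₜ[k] a) * T = T * ((1 : Ug) ⊗ₜ[k] a) := by
  induction T using TensorProduct.induction_on with
  | zero => simp
  | tmul u v => simp only [Algebra.TensorProduct.tmul_mul_tmul, one_mul, mul_one, ha v]
  | add T₁ T₂ h₁ h₂ => rw [mul_add, add_mul, h₁, h₂]

/-- Equivariance of the multiplication map. -/
theorem mul'_equivariant (x : g) (T : Ug ⊗[k] Ug) :
    LinearMap.mul' k Ug ((ιU k g x ⊗ₜ[k] 1 + 1 ⊗ₜ[k] ιU k g x) * T)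
      - LinearMap.mul' k Ug (T * (ιU k g x ⊗ₜ[k] 1 + 1 ⊗ₜ[k] ιU k g x))
      = ιU k g x * LinearMap.mul' k Ug T - LinearMap.mul' k Ug T * ιU k g x := by
  induction T using TensorProduct.induction_on with
  | zero => simp
  | tmul u v =>
      simp only [mul_add, add_mul, map_add, Algebra.TensorProduct.tmul_mul_tmul,
        LinearMap.mul'_apply, one_mul, mul_one]
      noncomm_ring
  | add T₁ T₂ h₁ h₂ =>
      simp only [mul_add, add_mul, map_add] at h₁ h₂ ⊢
      rw [sub_eq_iff_eq_add] at h₁ h₂ ⊢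
      rw [h₁, h₂]; abel

/-- `τU` corresponds to the flip on `g ⊗ g`. -/
theorem τU_ιι (t : g ⊗[k] g) :
    τU k g (ιι k g t) = ιι k g (TensorProduct.comm k g g t) := by
  induction t using TensorProduct.induction_on with
  | zero => simp
  | tmul x y => simp [ιι, τU]
  | add t₁ t₂ h₁ h₂ => simp only [map_add, h₁, h₂]

end Aux

-- ==================== maps for the master identities ====================

section Maps

set_option linter.unusedSectionVars false

/-- Embedding into slots 1,2 of the triple tensor product. -/
def e12 : Ug ⊗[k] Ug →ₐ[k] Ug ⊗[k] (Ug ⊗[k] Ug) :=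
  Algebra.TensorProduct.map (AlgHom.id k Ug) Algebra.TensorProduct.includeLeft

/-- Embedding into slots 1,3. -/
def e13 : Ug ⊗[k] Ug →ₐ[k] Ug ⊗[k] (Ug ⊗[k] Ug) :=
  Algebra.TensorProduct.map (AlgHom.id k Ug) Algebra.TensorProduct.includeRight

/-- Embedding into slots 2,3. -/
def e23 : Ug ⊗[k] Ug →ₐ[k] Ug ⊗[k] (Ug ⊗[k] Ug) :=
  Algebra.TensorProduct.includeRight

@[simp] theorem e12_tmul (u v : Ug) : e12 k g (u ⊗ₜ[k] v) = u ⊗ₜ[k] (v ⊗ₜ[k] 1) := by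
  simp [e12]

@[simp] theorem e13_tmul (u v : Ug) : e13 k g (u ⊗ₜ[k] v) = u ⊗ₜ[k] ((1 : Ug) ⊗ₜ[k] v) := by
  simp [e13]

@[simp] theorem e23_apply (T : Ug ⊗[k] Ug) : e23 k g T = (1 : Ug) ⊗ₜ[k] T := rfl

/-- The commutator-with-`X` map `u ↦ u * X - X * u`. -/
def adC (X : Ug ⊗[k] Ug) : Ug ⊗[k] Ug →ₗ[k] Ug ⊗[k] Ug :=
  LinearMap.mulRight k X - LinearMap.mulLeft k X

@[simp] theorem adC_apply (X u : Ug ⊗[k] Ug) : adC k g X u = u * X - X * u := rfl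

theorem adC_add (X X' : Ug ⊗[k] Ug) : adC k g (X + X') = adC k g X + adC k g X' := by
  refine LinearMap.ext fun u => ?_
  simp only [adC_apply, LinearMap.add_apply, mul_add, add_mul]
  abel

theorem adC_smul (c : k) (X : Ug ⊗[k] Ug) : adC k g (c • X) = c • adC k g X := by
  refine LinearMap.ext fun u => ?_
  simp only [adC_apply, LinearMap.smul_apply, mul_smul_comm, smul_mul_assoc, smul_sub]

/-- The "invariance defect" map: `z ⊗ w ↦ [Δ(ι z), X] ⊗ ι w`. -/
def MX (Δ : Ug →ₐ[k] Ug ⊗[k] Ug) (X : Ug ⊗[k] Ug) :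
    g ⊗[k] g →ₗ[k] (Ug ⊗[k] Ug) ⊗[k] Ug :=
  TensorProduct.map (adC k g X ∘ₗ (Δ.toLinearMap ∘ₗ ιU k g)) (ιU k g)

@[simp] theorem MX_tmul (Δ : Ug →ₐ[k] Ug ⊗[k] Ug) (X : Ug ⊗[k] Ug) (z w : g) :
    MX k g Δ X (z ⊗ₜ[k] w)
      = (Δ (ιU k g z) * X - X * Δ (ιU k g z)) ⊗ₜ[k] ιU k g w := by
  simp [MX]

theorem MX_add (Δ : Ug →ₐ[k] Ug ⊗[k] Ug) (X X' : Ug ⊗[k] Ug) :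
    MX k g Δ (X + X') = MX k g Δ X + MX k g Δ X' := by
  rw [MX, MX, MX, adC_add, LinearMap.add_comp, TensorProduct.map_add_left]

theorem MX_smul (Δ : Ug →ₐ[k] Ug ⊗[k] Ug) (c : k) (X : Ug ⊗[k] Ug) :
    MX k g Δ (c • X) = c • MX k g Δ X := by
  rw [MX, MX, adC_smul, LinearMap.smul_comp, TensorProduct.map_smul_left]

theorem MX_vanish (Δ : Ug →ₐ[k] Ug ⊗[k] Ug) (X : Ug ⊗[k] Ug)
    (h : ∀ x : g, Δ (ιU k g x) * X = X * Δ (ιU k g x)) :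
    MX k g Δ X = 0 := by
  have h0 : adC k g X ∘ₗ (Δ.toLinearMap ∘ₗ ιU k g) = 0 := by
    refine LinearMap.ext fun z => ?_
    simp [h z]
  rw [MX, h0]
  refine TensorProduct.ext' fun p f => ?_
  simp

/-- The commutator pairing associated to two linear maps into an algebra. -/
def cpairL {A : Type*} [Ring A] [Algebra k A]
    (f h : Ug ⊗[k] Ug →ₗ[k] A) : g ⊗[k] g →ₗ[k] g ⊗[k] g →ₗ[k] A :=
  LinearMap.mk₂ k (fun t s => f (ιι k g t) * h (ιι k g s) - h (ιι k g s) * f (ιι k g t))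
    (fun t t' s => by simp only [map_add, add_mul, mul_add]; abel)
    (fun c t s => by
      simp only [map_smul, smul_mul_assoc, mul_smul_comm, smul_sub])
    (fun t s s' => by simp only [map_add, add_mul, mul_add]; abel)
    (fun c t s => by
      simp only [map_smul, smul_mul_assoc, mul_smul_comm, smul_sub])

@[simp] theorem cpairL_apply {A : Type*} [Ring A] [Algebra k A]
    (f h : Ug ⊗[k] Ug →ₗ[k] A) (t s : g ⊗[k] g) :
    cpairL k g f h t s = f (ιι k g t) * h (ιι k g s) - h (ιι k g s) * f (ιι k g t) := rfl

/-- A relation map: a linear shape applied to the invariance defect. -/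
def rel {V : Type*} [AddCommGroup V] [Module k V] (Δ : Ug →ₐ[k] Ug ⊗[k] Ug)
    (Ψ : (Ug ⊗[k] Ug) ⊗[k] Ug →ₗ[k] V) : g ⊗[k] g →ₗ[k] g ⊗[k] g →ₗ[k] V :=
  LinearMap.mk₂ k (fun t s => Ψ (MX k g Δ (ιι k g t) s))
    (fun t t' s => by simp only [map_add, MX_add, LinearMap.add_apply])
    (fun c t s => by simp only [map_smul, MX_smul, LinearMap.smul_apply])
    (fun t s s' => by simp only [map_add])
    (fun c t s => by simp only [map_smul])

@[simp] theorem rel_apply {V : Type*} [AddCommGroup V] [Module k V]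
    (Δ : Ug →ₐ[k] Ug ⊗[k] Ug) (Ψ : (Ug ⊗[k] Ug) ⊗[k] Ug →ₗ[k] V) (t s : g ⊗[k] g) :
    rel k g Δ Ψ t s = Ψ (MX k g Δ (ιι k g t) s) := rfl

/-- Shape maps `(Ug ⊗ Ug) ⊗ Ug →ₗ Ug ⊗ Ug`. -/
def Φ0 : (Ug ⊗[k] Ug) ⊗[k] Ug →ₗ[k] Ug ⊗[k] Ug :=
  TensorProduct.lift ((LinearMap.mul k (Ug ⊗[k] Ug) ∘ₗ
    (Algebra.TensorProduct.includeLeft : Ug →ₐ[k] Ug ⊗[k] Ug).toLinearMap).flip)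

def Φ1 : (Ug ⊗[k] Ug) ⊗[k] Ug →ₗ[k] Ug ⊗[k] Ug :=
  TensorProduct.lift (((LinearMap.mul k (Ug ⊗[k] Ug)).flip ∘ₗ
    (Algebra.TensorProduct.includeLeft : Ug →ₐ[k] Ug ⊗[k] Ug).toLinearMap).flip)

def Φ2 : (Ug ⊗[k] Ug) ⊗[k] Ug →ₗ[k] Ug ⊗[k] Ug :=
  TensorProduct.lift ((LinearMap.mul k (Ug ⊗[k] Ug) ∘ₗ
    (Algebra.TensorProduct.includeRight : Ug →ₐ[k] Ug ⊗[k] Ug).toLinearMap).flip)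

def Φ3 : (Ug ⊗[k] Ug) ⊗[k] Ug →ₗ[k] Ug ⊗[k] Ug :=
  TensorProduct.lift (((LinearMap.mul k (Ug ⊗[k] Ug)).flip ∘ₗ
    (Algebra.TensorProduct.includeRight : Ug →ₐ[k] Ug ⊗[k] Ug).toLinearMap).flip)

def Φ4 : (Ug ⊗[k] Ug) ⊗[k] Ug →ₗ[k] Ug ⊗[k] Ug :=
  TensorProduct.map (LinearMap.mul' k Ug) LinearMap.id

def Φ5 : (Ug ⊗[k] Ug) ⊗[k] Ug →ₗ[k] Ug ⊗[k] Ug :=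
  (TensorProduct.comm k Ug Ug).toLinearMap ∘ₗ Φ4 k g

@[simp] theorem Φ0_tmul (p : Ug ⊗[k] Ug) (f : Ug) :
    Φ0 k g (p ⊗ₜ[k] f) = (f ⊗ₜ[k] (1 : Ug)) * p := by
  simp [Φ0]

@[simp] theorem Φ1_tmul (p : Ug ⊗[k] Ug) (f : Ug) :
    Φ1 k g (p ⊗ₜ[k] f) = p * (f ⊗ₜ[k] (1 : Ug)) := by
  simp [Φ1]

@[simp] theorem Φ2_tmul (p : Ug ⊗[k] Ug) (f : Ug) :
    Φ2 k g (p ⊗ₜ[k] f) = ((1 : Ug) ⊗ₜ[k] f) * p := by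
  simp [Φ2]

@[simp] theorem Φ3_tmul (p : Ug ⊗[k] Ug) (f : Ug) :
    Φ3 k g (p ⊗ₜ[k] f) = p * ((1 : Ug) ⊗ₜ[k] f) := by
  simp [Φ3]

@[simp] theorem Φ4_tmul (p : Ug ⊗[k] Ug) (f : Ug) :
    Φ4 k g (p ⊗ₜ[k] f) = LinearMap.mul' k Ug p ⊗ₜ[k] f := by
  simp [Φ4]

@[simp] theorem Φ5_tmul (p : Ug ⊗[k] Ug) (f : Ug) :
    Φ5 k g (p ⊗ₜ[k] f) = f ⊗ₜ[k] LinearMap.mul' k Ug p := by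
  simp [Φ5]

/-- The antisymmetrization (times 2) on `g ⊗ g`. -/
def θ2 : g ⊗[k] g →ₗ[k] g ⊗[k] g :=
  LinearMap.id - (TensorProduct.comm k g g).toLinearMap

@[simp] theorem θ2_tmul (x y : g) : θ2 k g (x ⊗ₜ[k] y) = x ⊗ₜ[k] y - y ⊗ₜ[k] x := by
  simp [θ2]

/-- The (integer-scaled) coboundary-of-multiplication map. -/
def ΞZ (Δ : Ug →ₐ[k] Ug ⊗[k] Ug) : Ug ⊗[k] Ug →ₗ[k] Ug ⊗[k] Ug :=
  (6 : ℤ) • LinearMap.id +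
    (((Algebra.TensorProduct.includeLeft : Ug →ₐ[k] Ug ⊗[k] Ug).toLinearMap
      + (Algebra.TensorProduct.includeRight : Ug →ₐ[k] Ug ⊗[k] Ug).toLinearMap
      - Δ.toLinearMap) ∘ₗ LinearMap.mul' k Ug)

theorem ΞZ_apply (Δ : Ug →ₐ[k] Ug ⊗[k] Ug) (T : Ug ⊗[k] Ug) :
    ΞZ k g Δ T = (6 : ℤ) • T + (LinearMap.mul' k Ug T ⊗ₜ[k] (1 : Ug)
      + (1 : Ug) ⊗ₜ[k] LinearMap.mul' k Ug T - Δ (LinearMap.mul' k Ug T)) := by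
  simp [ΞZ]

end Maps

-- ==================== the cocycle identity ====================

section Cocycle

set_option linter.unusedSectionVars false
set_option maxHeartbeats 1000000

theorem expand_id_Δ (Δ : Ug →ₐ[k] Ug ⊗[k] Ug)
    (hΔ : ∀ x : g, Δ (ιU k g x) = ιU k g x ⊗ₜ[k] 1 + 1 ⊗ₜ[k] ιU k g x) (t : g ⊗[k] g) :
    Algebra.TensorProduct.map (AlgHom.id k Ug) Δ (ιι k g t)
      = e12 k g (ιι k g t) + e13 k g (ιι k g t) := by
  induction t using TensorProduct.induction_on with
  | zero => simp
  | tmul x y =>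
      simp only [ιι, TensorProduct.map_tmul, Algebra.TensorProduct.map_tmul,
        AlgHom.coe_id, id_eq, hΔ y, e12_tmul, e13_tmul, TensorProduct.tmul_add]
  | add t₁ t₂ h₁ h₂ => simp only [map_add, h₁, h₂]; abel

theorem expand_Δ_id (Δ : Ug →ₐ[k] Ug ⊗[k] Ug)
    (hΔ : ∀ x : g, Δ (ιU k g x) = ιU k g x ⊗ₜ[k] 1 + 1 ⊗ₜ[k] ιU k g x) (t : g ⊗[k] g) :
    αU k g (Algebra.TensorProduct.map Δ (AlgHom.id k Ug) (ιι k g t))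
      = e13 k g (ιι k g t) + e23 k g (ιι k g t) := by
  induction t using TensorProduct.induction_on with
  | zero => simp
  | tmul x y =>
      simp only [ιι, TensorProduct.map_tmul, Algebra.TensorProduct.map_tmul,
        AlgHom.coe_id, id_eq, hΔ x, e13_tmul, e23_apply, TensorProduct.add_tmul,
        map_add, αU, Algebra.TensorProduct.assoc_tmul]
  | add t₁ t₂ h₁ h₂ => simp only [map_add, h₁, h₂]; abel

theorem expand_tmul_one (T : Ug ⊗[k] Ug) :
    αU k g (T ⊗ₜ[k] (1 : Ug)) = e12 k g T := by
  induction T using TensorProduct.induction_on with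
  | zero => simp
  | tmul u v => simp [αU]
  | add T₁ T₂ h₁ h₂ =>
      rw [TensorProduct.add_tmul, map_add, h₁, h₂, map_add]

/-- Master identity for the cocycle property. -/
theorem master1 (Δ : Ug →ₐ[k] Ug ⊗[k] Ug)
    (hΔ : ∀ x : g, Δ (ιU k g x) = ιU k g x ⊗ₜ[k] 1 + 1 ⊗ₜ[k] ιU k g x) :
    (cpairL (A := Ug ⊗[k] Ug) k g LinearMap.id LinearMap.id).compr₂
        (e23 k g).toLinearMap
      + cpairL (A := Ug ⊗[k] (Ug ⊗[k] Ug)) k g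
          ((e12 k g).toLinearMap + (e13 k g).toLinearMap)
          ((e12 k g).toLinearMap + (e13 k g).toLinearMap)
      + rel k g Δ (αU k g).toLinearMap
      + ((rel k g Δ (TensorProduct.comm k (Ug ⊗[k] Ug) Ug).toLinearMap).compl₂
          (TensorProduct.comm k g g).toLinearMap).flip
    = (cpairL (A := Ug ⊗[k] Ug) k g LinearMap.id LinearMap.id).compr₂
        (e12 k g).toLinearMap
      + cpairL (A := Ug ⊗[k] (Ug ⊗[k] Ug)) k g
          ((e13 k g).toLinearMap + (e23 k g).toLinearMap)
          ((e13 k g).toLinearMap + (e23 k g).toLinearMap)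
      + (rel k g Δ (TensorProduct.comm k (Ug ⊗[k] Ug) Ug).toLinearMap).compl₂
          (TensorProduct.comm k g g).toLinearMap
      + (rel k g Δ (αU k g).toLinearMap).flip := by
  refine TensorProduct.ext' fun x y => ?_
  refine TensorProduct.ext' fun z w => ?_
  simp only [LinearMap.add_apply, LinearMap.compr₂_apply, LinearMap.flip_apply,
    LinearMap.compl₂_apply, cpairL_apply, rel_apply, LinearMap.id_coe, id_eq,
    LinearEquiv.coe_coe, TensorProduct.comm_tmul, AlgEquiv.toLinearMap_apply,
    AlgHom.toLinearMap_apply, ιι, TensorProduct.map_tmul, MX_tmul, hΔ,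
    e12_tmul, e13_tmul, e23_apply]
  simp only [map_sub, map_mul, map_add, e12_tmul, e13_tmul, e23_apply]
  simp only [TensorProduct.add_tmul, TensorProduct.sub_tmul, TensorProduct.tmul_add,
    TensorProduct.tmul_sub, add_mul, mul_add, sub_mul, mul_sub, map_add, map_sub,
    Algebra.TensorProduct.tmul_mul_tmul, αU, Algebra.TensorProduct.assoc_tmul,
    one_mul, mul_one]
  abel

end Cocycle

-- ==================== the coboundary identity ====================

section Coboundary

set_option linter.unusedSectionVars false
set_option maxHeartbeats 4000000

/-- Master identity for the coboundary property (integer-scaled). -/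
theorem master2Z (Δ : Ug →ₐ[k] Ug ⊗[k] Ug)
    (hΔ : ∀ x : g, Δ (ιU k g x) = ιU k g x ⊗ₜ[k] 1 + 1 ⊗ₜ[k] ιU k g x) :
    (((cpairL (A := Ug ⊗[k] Ug) k g LinearMap.id LinearMap.id).compr₂
        (ΞZ k g Δ)) ∘ₗ θ2 k g).compl₂ (θ2 k g)
    = ((rel k g Δ (Φ0 k g + Φ1 k g - Φ2 k g - Φ3 k g - Φ4 k g + Φ5 k g)) ∘ₗ θ2 k g).compl₂
        (θ2 k g)
      + (((rel k g Δ ((2:ℤ) • Φ2 k g - (2:ℤ) • Φ1 k g)) ∘ₗ θ2 k g).compl₂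
          (θ2 k g)).flip := by
  refine TensorProduct.ext' fun x y => ?_
  refine TensorProduct.ext' fun z w => ?_
  simp only [LinearMap.add_apply, LinearMap.sub_apply, LinearMap.smul_apply,
    LinearMap.coe_comp, Function.comp_apply, LinearMap.compl₂_apply,
    LinearMap.compr₂_apply, LinearMap.flip_apply, cpairL_apply, rel_apply,
    LinearMap.id_coe, id_eq, θ2_tmul, map_sub, MX_tmul, ΞZ_apply]
  simp only [ιι, TensorProduct.map_tmul, hΔ, LinearMap.mul'_apply,
    Algebra.TensorProduct.tmul_mul_tmul]
  simp only [TensorProduct.add_tmul, TensorProduct.sub_tmul, TensorProduct.tmul_add,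
    TensorProduct.tmul_sub, add_mul, mul_add, sub_mul, mul_sub, map_add, map_sub,
    map_mul, hΔ, Algebra.TensorProduct.tmul_mul_tmul, LinearMap.mul'_apply,
    Φ0_tmul, Φ1_tmul, Φ2_tmul, Φ3_tmul, Φ4_tmul, Φ5_tmul,
    one_mul, mul_one, mul_assoc]
  abel

end Coboundary

set_option maxHeartbeats 2000000 in
/-- For `g`-invariant antisymmetric elements `X, Y` of the image of
`g ⊗ g` in `U(g) ⊗ U(g)`: (i) `[X,Y]` is a symmetric `g`-invariant additive 2-cocycle;
(ii) `[X,Y]` is the coboundary of a central element; (iii) `[X,Y]` commutes with every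
element of the same kind. -/
theorem commutator_of_invariant_twists
    (Δ : Ug →ₐ[k] Ug ⊗[k] Ug)
    (hΔ : ∀ x : g, Δ (ιU k g x) = ιU k g x ⊗ₜ[k] 1 + 1 ⊗ₜ[k] ιU k g x)
    (X Y : Ug ⊗[k] Ug)
    (hXr : X ∈ LinearMap.range (ιι k g)) (hYr : Y ∈ LinearMap.range (ιι k g))
    (hXa : τU k g X = -X) (hYa : τU k g Y = -Y)
    (hXinv : ∀ x : g, Δ (ιU k g x) * X = X * Δ (ιU k g x))
    (hYinv : ∀ x : g, Δ (ιU k g x) * Y = Y * Δ (ιU k g x)) :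
    (∀ x : g, Δ (ιU k g x) * (X * Y - Y * X) = (X * Y - Y * X) * Δ (ιU k g x)) ∧
    IsAdd2Cocycle k Δ (X * Y - Y * X) ∧
    τU k g (X * Y - Y * X) = X * Y - Y * X ∧
    (∃ a : Ug, (∀ u : Ug, a * u = u * a) ∧
      X * Y - Y * X = a ⊗ₜ[k] 1 + 1 ⊗ₜ[k] a - Δ a) ∧
    (∀ Z : Ug ⊗[k] Ug, Z ∈ LinearMap.range (ιι k g) → τU k g Z = -Z →
      (∀ x : g, Δ (ιU k g x) * Z = Z * Δ (ιU k g x)) →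
      (X * Y - Y * X) * Z = Z * (X * Y - Y * X)) := by
  obtain ⟨t, hX⟩ := hXr
  obtain ⟨s, hY⟩ := hYr
  -- (i) invariance
  have hCinv : ∀ x : g, Δ (ιU k g x) * (X * Y - Y * X)
      = (X * Y - Y * X) * Δ (ιU k g x) := by
    intro x
    have h1 : Δ (ιU k g x) * (X * Y) = (X * Y) * Δ (ιU k g x) := by
      rw [← mul_assoc, hXinv x, mul_assoc, hYinv x, ← mul_assoc]
    have h2 : Δ (ιU k g x) * (Y * X) = (Y * X) * Δ (ιU k g x) := by
      rw [← mul_assoc, hYinv x, mul_assoc, hXinv x, ← mul_assoc]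
    rw [mul_sub, sub_mul, h1, h2]
  -- symmetry
  have hτ : τU k g (X * Y - Y * X) = X * Y - Y * X := by
    rw [map_sub, map_mul, map_mul, hXa, hYa, neg_mul_neg, neg_mul_neg]
  -- vanishing of the invariance defects
  have h0X : MX k g Δ X = 0 := MX_vanish k g Δ X hXinv
  have h0Y : MX k g Δ Y = 0 := MX_vanish k g Δ Y hYinv
  have h0Xt : MX k g Δ (ιι k g t) = 0 := by rw [hX]; exact h0X
  have h0Ys : MX k g Δ (ιι k g s) = 0 := by rw [hY]; exact h0Y
  -- (i) the cocycle property
  have hcoc : IsAdd2Cocycle k Δ (X * Y - Y * X) := by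
    have hM := LinearMap.congr_fun (LinearMap.congr_fun (master1 k g Δ hΔ) t) s
    simp only [LinearMap.add_apply, LinearMap.compr₂_apply, LinearMap.flip_apply,
      LinearMap.compl₂_apply, cpairL_apply, rel_apply, LinearMap.id_coe, id_eq,
      AlgHom.toLinearMap_apply, AlgEquiv.toLinearMap_apply, LinearEquiv.coe_coe,
      h0Xt, h0Ys, hX, hY, h0X, h0Y, LinearMap.zero_apply, map_zero,
      add_zero] at hM
    have e1X : Algebra.TensorProduct.map (AlgHom.id k Ug) Δ X
        = e12 k g X + e13 k g X := by rw [← hX]; exact expand_id_Δ k g Δ hΔ t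
    have e1Y : Algebra.TensorProduct.map (AlgHom.id k Ug) Δ Y
        = e12 k g Y + e13 k g Y := by rw [← hY]; exact expand_id_Δ k g Δ hΔ s
    have e2X : αU k g (Algebra.TensorProduct.map Δ (AlgHom.id k Ug) X)
        = e13 k g X + e23 k g X := by rw [← hX]; exact expand_Δ_id k g Δ hΔ t
    have e2Y : αU k g (Algebra.TensorProduct.map Δ (AlgHom.id k Ug) Y)
        = e13 k g Y + e23 k g Y := by rw [← hY]; exact expand_Δ_id k g Δ hΔ s
    have hid : Algebra.TensorProduct.map (AlgHom.id k Ug) Δ (X * Y - Y * X)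
        = (e12 k g X + e13 k g X) * (e12 k g Y + e13 k g Y)
          - (e12 k g Y + e13 k g Y) * (e12 k g X + e13 k g X) := by
      rw [map_sub, map_mul, map_mul, e1X, e1Y]
    have hαid : αU k g (Algebra.TensorProduct.map Δ (AlgHom.id k Ug) (X * Y - Y * X))
        = (e13 k g X + e23 k g X) * (e13 k g Y + e23 k g Y)
          - (e13 k g Y + e23 k g Y) * (e13 k g X + e23 k g X) := by
      rw [map_sub, map_mul, map_sub, map_mul, map_mul, map_mul, e2X, e2Y]
    show (1 : Ug) ⊗ₜ[k] (X * Y - Y * X)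
        + Algebra.TensorProduct.map (AlgHom.id k Ug) Δ (X * Y - Y * X)
      = αU k g ((X * Y - Y * X) ⊗ₜ[k] (1 : Ug)
        + Algebra.TensorProduct.map Δ (AlgHom.id k Ug) (X * Y - Y * X))
    rw [map_add, expand_tmul_one k g (X * Y - Y * X), hid, hαid,
      ← e23_apply k g (X * Y - Y * X)]
    exact hM
  -- (ii) the coboundary property
  have hXt : ιι k g (θ2 k g t) = X + X := by
    have hc := τU_ιι k g t
    simp only [θ2, LinearMap.sub_apply, LinearMap.id_coe, id_eq, map_sub,
      LinearEquiv.coe_coe]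
    rw [← hc, hX, hXa, sub_neg_eq_add]
  have hYs : ιι k g (θ2 k g s) = Y + Y := by
    have hc := τU_ιι k g s
    simp only [θ2, LinearMap.sub_apply, LinearMap.id_coe, id_eq, map_sub,
      LinearEquiv.coe_coe]
    rw [← hc, hY, hYa, sub_neg_eq_add]
  have hM2 := LinearMap.congr_fun (LinearMap.congr_fun (master2Z k g Δ hΔ) t) s
  simp only [LinearMap.add_apply, LinearMap.coe_comp, Function.comp_apply,
    LinearMap.compl₂_apply, LinearMap.compr₂_apply, LinearMap.flip_apply,
    cpairL_apply, rel_apply, LinearMap.id_coe, id_eq, hXt, hYs,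
    MX_add, h0X, h0Y, add_zero, LinearMap.zero_apply, map_zero] at hM2
  have hCt : (X + X) * (Y + Y) - (Y + Y) * (X + X)
      = (4 : ℤ) • (X * Y - Y * X) := by
    simp only [mul_add, add_mul]; abel
  rw [hCt, map_zsmul] at hM2
  have h4 : ΞZ k g Δ (X * Y - Y * X) = 0 := by
    rw [← Int.cast_smul_eq_zsmul k] at hM2
    rcases smul_eq_zero.mp hM2 with h | h
    · norm_num at h
    · exact h
  rw [ΞZ_apply] at h4
  set m : Ug := LinearMap.mul' k Ug (X * Y - Y * X) with hm
  have hQ : m ⊗ₜ[k] (1 : Ug) + (1 : Ug) ⊗ₜ[k] m - Δ m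
      = -((6 : ℤ) • (X * Y - Y * X)) := eq_neg_of_add_eq_zero_right h4
  have hmcomm : ∀ x : g, ιU k g x * m = m * ιU k g x := by
    intro x
    have heq := mul'_equivariant k g x (X * Y - Y * X)
    rw [← hΔ x, hCinv x, sub_self] at heq
    exact sub_eq_zero.mp heq.symm
  have hcent : ∀ u : Ug, ((-(6:k)⁻¹) • m) * u = u * ((-(6:k)⁻¹) • m) := by
    refine central_of_commute_ι k g _ fun x => ?_
    rw [mul_smul_comm, smul_mul_assoc, hmcomm x]
  have hcob : X * Y - Y * X = ((-(6:k)⁻¹) • m) ⊗ₜ[k] (1 : Ug)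
      + (1 : Ug) ⊗ₜ[k] ((-(6:k)⁻¹) • m) - Δ ((-(6:k)⁻¹) • m) := by
    have hstep : ((-(6:k)⁻¹) • m) ⊗ₜ[k] (1 : Ug)
        + (1 : Ug) ⊗ₜ[k] ((-(6:k)⁻¹) • m) - Δ ((-(6:k)⁻¹) • m)
        = (-(6:k)⁻¹) • (m ⊗ₜ[k] (1 : Ug) + (1 : Ug) ⊗ₜ[k] m - Δ m) := by
      simp only [← TensorProduct.smul_tmul', TensorProduct.tmul_smul, map_smul,
        smul_add, smul_sub]
    rw [hstep, hQ, ← Int.cast_smul_eq_zsmul k, smul_neg, ← neg_smul, smul_smul]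
    norm_num
  -- (iii)
  refine ⟨hCinv, hcoc, hτ, ⟨(-(6:k)⁻¹) • m, hcent, hcob⟩, ?_⟩
  intro Z hZr hZa hZinv
  have hδ := commute_delta k g Δ Z hZinv
  rw [hcob, sub_mul, add_mul, mul_sub, mul_add,
    tmul_one_comm k g _ hcent Z, one_tmul_comm k g _ hcent Z, hδ]

end
end
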